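/- arXiv:0909.2586 — 2 statements merged into one kernel-verified Lean document; each statement's English description precedes it below -/
import Mathlib

section
/- Let 0 < p < ∞ and let w be a random variable on Ω with ℙ(w ≠ 0) > 2/3. Then there exists a constant C₁ = C₁(p,w) > 0, independent of the sequence (x_n), such that for every (x_n)_{n≥1} ∈ ℓ² and ξ = Σ_{n≥1} r_n x_n one has C₁⁻¹ (Σ_{n≥1} x_n²)^{1/2} ≤ ‖w ξ‖_p. -/
open MeasureTheory ProbabilityTheory ENNReal

/-- A Rademacher sequence: independent random variables taking the values `1` and `-1`,
each with probability `1/2`. -/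
def IsRademacherSeq {Ω : Type*} [MeasurableSpace Ω] (P : Measure Ω) (r : ℕ → Ω → ℝ) : Prop :=
  (∀ n, Measurable (r n)) ∧
  iIndepFun (m := fun _ => Real.measurableSpace) r P ∧
  (∀ n, P {ω | r n ω = 1} = 1/2 ∧ P {ω | r n ω = -1} = 1/2)

open Filter Topology

section AuxLemmas
variable {Ω : Type*} [MeasurableSpace Ω] {P : Measure Ω} [IsProbabilityMeasure P]
variable {r : ℕ → Ω → ℝ}

variable {Ω : Type*} [MeasurableSpace Ω] {P : Measure Ω} [IsProbabilityMeasure P]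

lemma integrable_of_ae_bound {g : Ω → ℝ} (hm : Measurable g) {c : ℝ}
    (hbd : ∀ᵐ ω ∂P, |g ω| ≤ c) : Integrable g P :=
  memLp_one_iff_integrable.mp
    (MemLp.of_bound hm.aestronglyMeasurable c (by simpa [Real.norm_eq_abs] using hbd))

lemma rpow_two_eq_sq (t : ℝ) : t ^ (2:ℝ) = t ^ 2 := by
  rw [show (2:ℝ) = ((2:ℕ):ℝ) by norm_num, Real.rpow_natCast]

/-- Paley–Zygmund inequality. -/
lemma pz_aux (Z : Ω → ℝ) (hZm : Measurable Z) (hZnn : 0 ≤ᵐ[P] Z)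
    (hZi : Integrable Z P) (hZ2 : Integrable (fun ω => Z ω ^ 2) P)
    {θ : ℝ} (hθ0 : 0 ≤ θ) (hθ1 : θ ≤ 1) :
    (1 - θ) ^ 2 * (∫ ω, Z ω ∂P) ^ 2 ≤
      (∫ ω, Z ω ^ 2 ∂P) * (P {ω | θ * ∫ ω, Z ω ∂P < Z ω}).toReal := by
  have hEZnn : 0 ≤ ∫ ω, Z ω ∂P := integral_nonneg_of_ae hZnn
  set a := θ * ∫ ω, Z ω ∂P with ha
  have hann : 0 ≤ a := mul_nonneg hθ0 hEZnn
  set B := {ω | a < Z ω} with hB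
  have hBm : MeasurableSet B := measurableSet_lt measurable_const hZm
  have hsplit : ∫ ω, Z ω ∂P = (∫ ω in B, Z ω ∂P) + ∫ ω in Bᶜ, Z ω ∂P :=
    (integral_add_compl hBm hZi).symm
  have h1 : ∫ ω in Bᶜ, Z ω ∂P ≤ a := by
    have h1a : ∫ ω in Bᶜ, Z ω ∂P ≤ ∫ ω in Bᶜ, a ∂P := by
      refine setIntegral_mono_on hZi.integrableOn
        integrableOn_const hBm.compl ?_
      intro ω hω
      simpa [B] using hω
    have h1b : ∫ ω in Bᶜ, a ∂P = a * (P Bᶜ).toReal := by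
      rw [setIntegral_const, smul_eq_mul, mul_comm]; rfl
    have h1c : (P Bᶜ).toReal ≤ 1 := by
      simpa using ENNReal.toReal_mono (by simp) (prob_le_one (μ := P) (s := Bᶜ))
    calc ∫ ω in Bᶜ, Z ω ∂P ≤ a * (P Bᶜ).toReal := by rw [← h1b]; exact h1a
      _ ≤ a * 1 := by gcongr
      _ = a := mul_one a
  -- Cauchy–Schwarz on B
  set u := ∫ ω, Z ω ^ 2 ∂P with hu
  have hunn : 0 ≤ u := integral_nonneg (fun ω => sq_nonneg _)
  set v := (P B).toReal with hv
  have hvnn : 0 ≤ v := ENNReal.toReal_nonneg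
  have h2 : ∫ ω in B, Z ω ∂P ≤ u ^ (1/2:ℝ) * v ^ (1/2:ℝ) := by
    set g : Ω → ℝ := B.indicator (fun _ => (1:ℝ)) with hg
    have hgm : Measurable g := measurable_const.indicator hBm
    have hconj : Real.HolderConjugate 2 2 := Real.holderConjugate_iff.mpr ⟨one_lt_two, by norm_num⟩
    have hZmem : MemLp Z (ENNReal.ofReal 2) P := by
      rw [show ENNReal.ofReal 2 = 2 by simp]
      exact (memLp_two_iff_integrable_sq hZm.aestronglyMeasurable).mpr hZ2
    have hgmem : MemLp g (ENNReal.ofReal 2) P := by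
      refine MemLp.of_bound hgm.aestronglyMeasurable 1 ?_
      refine Eventually.of_forall fun ω => ?_
      by_cases h : ω ∈ B <;> simp [hg, h]
    have hCS := integral_mul_le_Lp_mul_Lq_of_nonneg hconj hZnn
      (Eventually.of_forall fun ω => Set.indicator_nonneg (fun _ _ => zero_le_one) ω)
      hZmem hgmem
    have hL : ∫ ω, Z ω * g ω ∂P = ∫ ω in B, Z ω ∂P := by
      rw [← integral_indicator hBm]
      refine integral_congr_ae (Eventually.of_forall fun ω => ?_)
      by_cases h : ω ∈ B <;> simp [hg, h]
    have hR1 : ∫ ω, Z ω ^ (2:ℝ) ∂P = u := by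
      refine integral_congr_ae (Eventually.of_forall fun ω => ?_)
      exact rpow_two_eq_sq _
    have hR2 : ∫ ω, g ω ^ (2:ℝ) ∂P = v := by
      have : ∫ ω, g ω ^ (2:ℝ) ∂P = ∫ ω, g ω ∂P := by
        refine integral_congr_ae (Eventually.of_forall fun ω => ?_)
        by_cases h : ω ∈ B <;> simp [hg, h, Real.zero_rpow (by norm_num : (2:ℝ) ≠ 0)]
      rw [this, hg, integral_indicator hBm]
      simp [hv]; rfl
    rw [hL, hR1, hR2] at hCS
    exact hCS
  have h3 : (1 - θ) * ∫ ω, Z ω ∂P ≤ u ^ (1/2:ℝ) * v ^ (1/2:ℝ) := by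
    have := hsplit
    nlinarith [h1, h2]
  have h4 : 0 ≤ (1 - θ) * ∫ ω, Z ω ∂P := mul_nonneg (by linarith) hEZnn
  have h5 : ((1 - θ) * ∫ ω, Z ω ∂P) ^ 2 ≤ (u ^ (1/2:ℝ) * v ^ (1/2:ℝ)) ^ 2 :=
    pow_le_pow_left₀ h4 h3 2
  have h6 : (u ^ (1/2:ℝ) * v ^ (1/2:ℝ)) ^ 2 = u * v := by
    rw [mul_pow, ← rpow_two_eq_sq (u ^ (1/2:ℝ)), ← rpow_two_eq_sq (v ^ (1/2:ℝ)),
      ← Real.rpow_mul hunn, ← Real.rpow_mul hvnn]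
    norm_num
  calc (1 - θ) ^ 2 * (∫ ω, Z ω ∂P) ^ 2 = ((1 - θ) * ∫ ω, Z ω ∂P) ^ 2 := by ring
    _ ≤ u * v := h6 ▸ h5

variable {Ω : Type*} [MeasurableSpace Ω] {P : Measure Ω} [IsProbabilityMeasure P]
variable {r : ℕ → Ω → ℝ}

lemma rad_ae (hr : IsRademacherSeq P r) : ∀ᵐ ω ∂P, ∀ n, r n ω = 1 ∨ r n ω = -1 := by
  rw [ae_all_iff]
  intro n
  set A := {ω | r n ω = 1} with hA
  set B := {ω | r n ω = -1} with hB
  have hAm : MeasurableSet A := hr.1 n (measurableSet_singleton 1)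
  have hBm : MeasurableSet B := hr.1 n (measurableSet_singleton (-1))
  have hd : Disjoint A B := by
    rw [Set.disjoint_left]
    intro ω h1 h2
    rw [Set.mem_setOf_eq] at h1 h2
    norm_num [h1] at h2
  have hU : P (A ∪ B) = 1 := by
    rw [measure_union hd hBm, (hr.2.2 n).1, (hr.2.2 n).2]
    exact ENNReal.add_halves 1
  have hcompl : P ((A ∪ B)ᶜ) = 0 := by
    rw [measure_compl (hAm.union hBm) (measure_ne_top _ _), hU, measure_univ, tsub_self]
  refine measure_mono_null ?_ hcompl
  intro ω hω
  simp only [Set.mem_compl_iff, Set.mem_union, A, B, Set.mem_setOf_eq]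
  simpa using hω

lemma rad_integral (hr : IsRademacherSeq P r) (n : ℕ) : ∫ ω, r n ω ∂P = 0 := by
  set A := {ω | r n ω = 1} with hA
  set B := {ω | r n ω = -1} with hB
  have hAm : MeasurableSet A := hr.1 n (measurableSet_singleton 1)
  have hBm : MeasurableSet B := hr.1 n (measurableSet_singleton (-1))
  have hcong : r n =ᵐ[P] fun ω => A.indicator (fun _ => (1:ℝ)) ω + B.indicator (fun _ => (-1:ℝ)) ω := by
    filter_upwards [rad_ae hr] with ω hω
    rcases hω n with h | h
    · have hωA : ω ∈ A := h
      have hωB : ω ∉ B := by simp only [B, Set.mem_setOf_eq, h]; norm_num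
      simp [Set.indicator_of_mem hωA, Set.indicator_of_notMem hωB, h]
    · have hωB : ω ∈ B := h
      have hωA : ω ∉ A := by simp only [A, Set.mem_setOf_eq, h]; norm_num
      simp [Set.indicator_of_mem hωB, Set.indicator_of_notMem hωA, h]
  rw [integral_congr_ae hcong, integral_add ((integrable_const (1:ℝ)).indicator hAm)
    ((integrable_const (-1:ℝ)).indicator hBm), integral_indicator_const _ hAm,
    integral_indicator_const _ hBm]
  simp only [Measure.real]
  rw [(hr.2.2 n).1, (hr.2.2 n).2]
  simp

lemma rad_integral_cube (hr : IsRademacherSeq P r) (n : ℕ) : ∫ ω, r n ω ^ 3 ∂P = 0 := by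
  have : (fun ω => r n ω ^ 3) =ᵐ[P] r n := by
    filter_upwards [rad_ae hr] with ω hω
    rcases hω n with h | h <;> rw [h] <;> norm_num
  rw [integral_congr_ae this, rad_integral hr n]

lemma rad_integral_sq (hr : IsRademacherSeq P r) (n : ℕ) : ∫ ω, r n ω ^ 2 ∂P = 1 := by
  have : (fun ω => r n ω ^ 2) =ᵐ[P] fun _ => (1:ℝ) := by
    filter_upwards [rad_ae hr] with ω hω
    rcases hω n with h | h <;> rw [h] <;> norm_num
  rw [integral_congr_ae this]
  simp

lemma rad_integral_fourth (hr : IsRademacherSeq P r) (n : ℕ) : ∫ ω, r n ω ^ 4 ∂P = 1 := by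
  have : (fun ω => r n ω ^ 4) =ᵐ[P] fun _ => (1:ℝ) := by
    filter_upwards [rad_ae hr] with ω hω
    rcases hω n with h | h <;> rw [h] <;> norm_num
  rw [integral_congr_ae this]
  simp

lemma rad_moments (hr : IsRademacherSeq P r) (x : ℕ → ℝ) (N : ℕ) :
    (∫ ω, (∑ i ∈ Finset.range N, x i * r i ω) ^ 2 ∂P = ∑ i ∈ Finset.range N, x i ^ 2) ∧
    (∫ ω, (∑ i ∈ Finset.range N, x i * r i ω) ^ 4 ∂P
      ≤ 3 * (∑ i ∈ Finset.range N, x i ^ 2) ^ 2) := by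
  set f : ℕ → Ω → ℝ := fun i ω => x i * r i ω with hf
  have hfmeas : ∀ i, Measurable (f i) := fun i => (hr.1 i).const_mul (x i)
  have hSmeas : ∀ N, Measurable (fun ω => ∑ i ∈ Finset.range N, f i ω) := fun N =>
    Finset.measurable_sum _ (fun i _ => hfmeas i)
  -- a.e. bounds
  have hrbd : ∀ᵐ ω ∂P, ∀ n, |r n ω| = 1 := by
    filter_upwards [rad_ae hr] with ω hω n
    rcases hω n with h | h <;> rw [h] <;> norm_num
  have hSbd : ∀ N, ∀ᵐ ω ∂P, |∑ i ∈ Finset.range N, f i ω| ≤ ∑ i ∈ Finset.range N, |x i| := by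
    intro N
    filter_upwards [hrbd] with ω hω
    refine (Finset.abs_sum_le_sum_abs _ _).trans ?_
    refine Finset.sum_le_sum fun i _ => ?_
    rw [hf, abs_mul, hω i, mul_one]
  -- integrability of S^a * f^b
  have hInt : ∀ N a b : ℕ, Integrable
      (fun ω => (∑ i ∈ Finset.range N, f i ω) ^ a * f N ω ^ b) P := by
    intro N a b
    refine integrable_of_ae_bound (((hSmeas N).pow_const a).mul ((hfmeas N).pow_const b))
      (c := (∑ i ∈ Finset.range N, |x i|) ^ a * |x N| ^ b) ?_
    filter_upwards [hSbd N, hrbd] with ω h1 h2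
    rw [abs_mul, abs_pow, abs_pow]
    have hfb : |f N ω| ≤ |x N| := by rw [hf, abs_mul, h2 N, mul_one]
    have hc : (0:ℝ) ≤ ∑ i ∈ Finset.range N, |x i| :=
      Finset.sum_nonneg fun i _ => abs_nonneg _
    exact mul_le_mul (pow_le_pow_left₀ (abs_nonneg _) h1 a)
      (pow_le_pow_left₀ (abs_nonneg _) hfb b) (by positivity) (by positivity)
  -- independence and cross moments
  have hcross : ∀ N a b : ℕ,
      ∫ ω, (∑ i ∈ Finset.range N, f i ω) ^ a * f N ω ^ b ∂P =
      (∫ ω, (∑ i ∈ Finset.range N, f i ω) ^ a ∂P) * ∫ ω, f N ω ^ b ∂P := by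
    intro N a b
    have hfam : iIndepFun (m := fun _ => Real.measurableSpace) f P := by
      have := hr.2.1.comp (fun i (y : ℝ) => x i * y) (fun i => measurable_const_mul (x i))
      exact this
    have hind : IndepFun (fun ω => ∑ i ∈ Finset.range N, f i ω) (f N) P := by
      have := hfam.indepFun_sum_range_succ hfmeas N
      have heq : (∑ j ∈ Finset.range N, f j) = fun ω => ∑ i ∈ Finset.range N, f i ω := by
        funext ω; simp [Finset.sum_apply]
      rwa [heq] at this
    have hindp : IndepFun (fun ω => (∑ i ∈ Finset.range N, f i ω) ^ a)
        (fun ω => f N ω ^ b) P :=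
      hind.comp (measurable_id.pow_const a) (measurable_id.pow_const b)
    exact hindp.integral_mul_eq_mul_integral ((hSmeas N).pow_const a).aestronglyMeasurable
      ((hfmeas N).pow_const b).aestronglyMeasurable
  -- moments of f N
  have hEf1 : ∀ N, ∫ ω, f N ω ^ 1 ∂P = 0 := by
    intro N; simp only [pow_one, hf]
    rw [integral_const_mul, rad_integral hr N, mul_zero]
  have hEf2 : ∀ N, ∫ ω, f N ω ^ 2 ∂P = x N ^ 2 := by
    intro N; simp only [hf, mul_pow]
    rw [integral_const_mul, rad_integral_sq hr N, mul_one]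
  have hEf3 : ∀ N, ∫ ω, f N ω ^ 3 ∂P = 0 := by
    intro N; simp only [hf, mul_pow]
    rw [integral_const_mul, rad_integral_cube hr N, mul_zero]
  have hEf4 : ∀ N, ∫ ω, f N ω ^ 4 ∂P = x N ^ 4 := by
    intro N; simp only [hf, mul_pow]
    rw [integral_const_mul, rad_integral_fourth hr N, mul_one]
  have hadd : ∀ (g1 g2 : Ω → ℝ), Integrable g1 P → Integrable g2 P →
      ∫ ω, (g1 ω + g2 ω) ∂P = (∫ ω, g1 ω ∂P) + ∫ ω, g2 ω ∂P :=
    fun g1 g2 h1 h2 => integral_add h1 h2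
  have haddInt : ∀ (g1 g2 : Ω → ℝ), Integrable g1 P → Integrable g2 P →
      Integrable (fun ω => g1 ω + g2 ω) P := fun g1 g2 h1 h2 => h1.add h2
  induction N with
  | zero => simp
  | succ N ih =>
    obtain ⟨ih2, ih4⟩ := ih
    have hstep : ∀ ω, ∑ i ∈ Finset.range (N+1), f i ω
        = (∑ i ∈ Finset.range N, f i ω) + f N ω := fun ω => Finset.sum_range_succ _ N
    have hs2 : ∑ i ∈ Finset.range (N+1), x i ^ 2 = (∑ i ∈ Finset.range N, x i ^ 2) + x N ^ 2 :=
      Finset.sum_range_succ _ N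
    have hs2nn : (0:ℝ) ≤ ∑ i ∈ Finset.range N, x i ^ 2 :=
      Finset.sum_nonneg fun i _ => sq_nonneg _
    -- second moment
    have e2 : ∫ ω, (∑ i ∈ Finset.range (N+1), f i ω) ^ 2 ∂P
        = (∑ i ∈ Finset.range N, x i ^ 2) + x N ^ 2 := by
      have hexp : (fun ω => (∑ i ∈ Finset.range (N+1), f i ω) ^ 2)
          = fun ω => (∑ i ∈ Finset.range N, f i ω) ^ 2 * f N ω ^ 0
            + (2 * ((∑ i ∈ Finset.range N, f i ω) ^ 1 * f N ω ^ 1)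
              + (∑ i ∈ Finset.range N, f i ω) ^ 0 * f N ω ^ 2) := by
        funext ω; rw [hstep ω]; ring
      have ih2' : ∫ ω, (∑ i ∈ Finset.range N, f i ω) ^ 2 ∂P
          = ∑ i ∈ Finset.range N, x i ^ 2 := ih2
      rw [hexp,
        hadd (fun ω => (∑ i ∈ Finset.range N, f i ω) ^ 2 * f N ω ^ 0)
          (fun ω => 2 * ((∑ i ∈ Finset.range N, f i ω) ^ 1 * f N ω ^ 1)
            + (∑ i ∈ Finset.range N, f i ω) ^ 0 * f N ω ^ 2)
          (hInt N 2 0) (haddInt _ _ ((hInt N 1 1).const_mul 2) (hInt N 0 2)),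
        hadd (fun ω => 2 * ((∑ i ∈ Finset.range N, f i ω) ^ 1 * f N ω ^ 1))
          (fun ω => (∑ i ∈ Finset.range N, f i ω) ^ 0 * f N ω ^ 2)
          ((hInt N 1 1).const_mul 2) (hInt N 0 2),
        integral_const_mul, hcross N 2 0, hcross N 1 1, hcross N 0 2, hEf1 N, hEf2 N]
      simp only [pow_zero, integral_const, measure_univ, ENNReal.toReal_one, probReal_univ, smul_eq_mul,
        mul_one, one_mul, mul_zero, add_zero, zero_add]
      try rw [ih2']
      try ring
    constructor
    · show ∫ ω, (∑ i ∈ Finset.range (N+1), f i ω) ^ 2 ∂P = ∑ i ∈ Finset.range (N+1), x i ^ 2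
      rw [e2, hs2]
    -- fourth moment
    · show ∫ ω, (∑ i ∈ Finset.range (N+1), f i ω) ^ 4 ∂P
          ≤ 3 * (∑ i ∈ Finset.range (N+1), x i ^ 2) ^ 2
      have e4 : ∫ ω, (∑ i ∈ Finset.range (N+1), f i ω) ^ 4 ∂P
          = (∫ ω, (∑ i ∈ Finset.range N, f i ω) ^ 4 ∂P)
            + 6 * (∑ i ∈ Finset.range N, x i ^ 2) * x N ^ 2 + x N ^ 4 := by
        have hexp : (fun ω => (∑ i ∈ Finset.range (N+1), f i ω) ^ 4)
            = fun ω => (∑ i ∈ Finset.range N, f i ω) ^ 4 * f N ω ^ 0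
              + (4 * ((∑ i ∈ Finset.range N, f i ω) ^ 3 * f N ω ^ 1)
                + (6 * ((∑ i ∈ Finset.range N, f i ω) ^ 2 * f N ω ^ 2)
                  + (4 * ((∑ i ∈ Finset.range N, f i ω) ^ 1 * f N ω ^ 3)
                    + (∑ i ∈ Finset.range N, f i ω) ^ 0 * f N ω ^ 4))) := by
          funext ω; rw [hstep ω]; ring
        have ih2' : ∫ ω, (∑ i ∈ Finset.range N, f i ω) ^ 2 ∂P
            = ∑ i ∈ Finset.range N, x i ^ 2 := ih2
        rw [hexp,
          hadd (fun ω => (∑ i ∈ Finset.range N, f i ω) ^ 4 * f N ω ^ 0)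
            (fun ω => 4 * ((∑ i ∈ Finset.range N, f i ω) ^ 3 * f N ω ^ 1)
              + (6 * ((∑ i ∈ Finset.range N, f i ω) ^ 2 * f N ω ^ 2)
                + (4 * ((∑ i ∈ Finset.range N, f i ω) ^ 1 * f N ω ^ 3)
                  + (∑ i ∈ Finset.range N, f i ω) ^ 0 * f N ω ^ 4)))
            (hInt N 4 0) (haddInt _ _ ((hInt N 3 1).const_mul 4)
              (haddInt _ _ ((hInt N 2 2).const_mul 6)
                (haddInt _ _ ((hInt N 1 3).const_mul 4) (hInt N 0 4)))),
          hadd (fun ω => 4 * ((∑ i ∈ Finset.range N, f i ω) ^ 3 * f N ω ^ 1))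
            (fun ω => 6 * ((∑ i ∈ Finset.range N, f i ω) ^ 2 * f N ω ^ 2)
              + (4 * ((∑ i ∈ Finset.range N, f i ω) ^ 1 * f N ω ^ 3)
                + (∑ i ∈ Finset.range N, f i ω) ^ 0 * f N ω ^ 4))
            ((hInt N 3 1).const_mul 4) (haddInt _ _ ((hInt N 2 2).const_mul 6)
              (haddInt _ _ ((hInt N 1 3).const_mul 4) (hInt N 0 4))),
          hadd (fun ω => 6 * ((∑ i ∈ Finset.range N, f i ω) ^ 2 * f N ω ^ 2))
            (fun ω => 4 * ((∑ i ∈ Finset.range N, f i ω) ^ 1 * f N ω ^ 3)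
              + (∑ i ∈ Finset.range N, f i ω) ^ 0 * f N ω ^ 4)
            ((hInt N 2 2).const_mul 6)
            (haddInt _ _ ((hInt N 1 3).const_mul 4) (hInt N 0 4)),
          hadd (fun ω => 4 * ((∑ i ∈ Finset.range N, f i ω) ^ 1 * f N ω ^ 3))
            (fun ω => (∑ i ∈ Finset.range N, f i ω) ^ 0 * f N ω ^ 4)
            ((hInt N 1 3).const_mul 4) (hInt N 0 4),
          integral_const_mul, integral_const_mul, integral_const_mul,
          hcross N 4 0, hcross N 3 1, hcross N 2 2, hcross N 1 3, hcross N 0 4,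
          hEf1 N, hEf2 N, hEf3 N, hEf4 N, ih2']
        simp only [pow_zero, integral_const, measure_univ, ENNReal.toReal_one, probReal_univ, smul_eq_mul,
          mul_one, one_mul, mul_zero, add_zero, zero_add]
        ring
      rw [e4, hs2]
      have ih4' : ∫ ω, (∑ i ∈ Finset.range N, f i ω) ^ 4 ∂P
          ≤ 3 * (∑ i ∈ Finset.range N, x i ^ 2) ^ 2 := ih4
      nlinarith [ih4', sq_nonneg (x N), sq_nonneg (x N ^ 2), hs2nn]

end AuxLemmas

/-- Lower weighted Khintchine inequality: if `ℙ(w ≠ 0) > 2/3` then there is `C₁ > 0`,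
independent of `(x_n)`, with `C₁⁻¹ (∑ x_n²)^{1/2} ≤ ‖w ξ‖_p` for all Rademacher sums
`ξ = ∑ r_n x_n`. -/
theorem weighted_khintchine_lower
    {Ω : Type*} [MeasurableSpace Ω] (P : Measure Ω) [IsProbabilityMeasure P]
    (r : ℕ → Ω → ℝ) (hr : IsRademacherSeq P r)
    (p : ℝ) (hp : 0 < p)
    (w : Ω → ℝ) (hwmeas : Measurable w)
    (hw0 : P {ω | w ω ≠ 0} > 2/3) :
    ∃ C₁ > (0:ℝ), ∀ (x : ℕ → ℝ) (ξ : Ω → ℝ),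
      Summable (fun n => x n ^ 2) →
      (∀ᵐ ω ∂P, HasSum (fun n => r n ω * x n) (ξ ω)) →
      ENNReal.ofReal (C₁⁻¹ * (∑' n, x n ^ 2) ^ (1/2 : ℝ)) ≤
        eLpNorm (fun ω => w ω * ξ ω) (ENNReal.ofReal p) P := by
  -- Step 1: find δ > 0 with P {δ ≤ |w|} > 2/3
  have hUmono : Monotone (fun k : ℕ => {ω | 1/((k:ℝ)+1) ≤ |w ω|}) := by
    intro k l hkl ω hω
    simp only [Set.mem_setOf_eq] at hω ⊢
    refine le_trans (one_div_le_one_div_of_le (by positivity) ?_) hω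
    have : (k:ℝ) ≤ l := Nat.cast_le.mpr hkl
    linarith
  have hUnion : (⋃ k : ℕ, {ω | 1/((k:ℝ)+1) ≤ |w ω|}) = {ω | w ω ≠ 0} := by
    ext ω
    simp only [Set.mem_iUnion, Set.mem_setOf_eq]
    constructor
    · rintro ⟨k, hk⟩ h0
      rw [h0, abs_zero] at hk
      have : (0:ℝ) < 1/((k:ℝ)+1) := by positivity
      linarith
    · intro h0
      obtain ⟨k, hk⟩ := exists_nat_one_div_lt (abs_pos.mpr h0)
      exact ⟨k, hk.le⟩
  have htendU : Tendsto (fun k : ℕ => P {ω | 1/((k:ℝ)+1) ≤ |w ω|}) atTop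
      (𝓝 (P {ω | w ω ≠ 0})) := by
    have := tendsto_measure_iUnion_atTop (μ := P) hUmono
    rwa [hUnion] at this
  obtain ⟨k₀, hk₀⟩ := (htendU.eventually (eventually_gt_nhds hw0)).exists
  set δ : ℝ := 1/((k₀:ℝ)+1) with hδdef
  have hδ : 0 < δ := by positivity
  set A : Set Ω := {ω | δ ≤ |w ω|} with hAdef
  have hAm : MeasurableSet A := measurableSet_le measurable_const hwmeas.abs
  -- Step 2: ε
  have h23top : ((2:ℝ≥0∞)/3) ≠ ⊤ := by
    refine ne_of_lt (lt_of_le_of_lt ?_ (by norm_num : (1:ℝ≥0∞) < ⊤))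
    rw [ENNReal.div_le_iff (by norm_num) (by norm_num)]
    norm_num
  have h23 : ((2:ℝ≥0∞)/3).toReal = 2/3 := by
    rw [ENNReal.toReal_div]; norm_num
  have hm23 : 2/3 < (P A).toReal := by
    have := (ENNReal.toReal_lt_toReal h23top (measure_ne_top P A)).mpr hk₀
    rwa [h23] at this
  set ε : ℝ := (P A).toReal - 2/3 with hεdef
  have hε : 0 < ε := by simp only [hεdef]; linarith
  have hmle1 : (P A).toReal ≤ 1 := by
    have := ENNReal.toReal_mono (by norm_num) (prob_le_one (μ := P) (s := A))
    simpa using this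
  have hε3 : ε ≤ 1/3 := by simp only [hεdef]; linarith
  have hPA : P A = ENNReal.ofReal (2/3 + ε) := by
    rw [show (2:ℝ)/3 + ε = (P A).toReal by simp only [hεdef]; ring,
      ENNReal.ofReal_toReal (measure_ne_top P A)]
  -- the constant
  refine ⟨(δ * Real.sqrt ε * (ε/3) ^ (1/p))⁻¹, by positivity, ?_⟩
  intro x ξ hxsum hξ
  by_cases hσ : (∑' n, x n ^ 2) = 0
  · rw [hσ, Real.zero_rpow (by norm_num : (1/2:ℝ) ≠ 0), mul_zero, ENNReal.ofReal_zero]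
    exact bot_le
  set σ2 : ℝ := ∑' n, x n ^ 2 with hσ2def
  have hσ2nn : 0 ≤ σ2 := tsum_nonneg fun n => sq_nonneg _
  have hσ2pos : 0 < σ2 := lt_of_le_of_ne hσ2nn (Ne.symm hσ)
  set s2 : ℕ → ℝ := fun N => ∑ i ∈ Finset.range N, x i ^ 2 with hs2def
  have hs2nn : ∀ N, 0 ≤ s2 N := fun N => Finset.sum_nonneg fun i _ => sq_nonneg _
  set S : ℕ → Ω → ℝ := fun N ω => ∑ i ∈ Finset.range N, x i * r i ω with hSdef
  have hSmeas : ∀ N, Measurable (S N) := fun N =>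
    Finset.measurable_sum _ fun i _ => (hr.1 i).const_mul (x i)
  have hSbd : ∀ N, ∀ᵐ ω ∂P, |S N ω| ≤ ∑ i ∈ Finset.range N, |x i| := by
    intro N
    filter_upwards [rad_ae hr] with ω hω
    refine (Finset.abs_sum_le_sum_abs _ _).trans (Finset.sum_le_sum fun i _ => ?_)
    rw [abs_mul]
    rcases hω i with h | h <;> rw [h] <;> simp
  have hIntS : ∀ N k, Integrable (fun ω => S N ω ^ k) P := by
    intro N k
    refine integrable_of_ae_bound ((hSmeas N).pow_const k)
      (c := (∑ i ∈ Finset.range N, |x i|) ^ k) ?_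
    filter_upwards [hSbd N] with ω hω
    rw [abs_pow]
    exact pow_le_pow_left₀ (abs_nonneg _) hω k
  -- Paley-Zygmund for partial sums
  obtain ⟨k₁, hk₁⟩ : ∃ k, 0 < x k ^ 2 := by
    by_contra hcon
    push_neg at hcon
    have hz : ∀ n, x n ^ 2 = 0 := fun n => le_antisymm (hcon n) (sq_nonneg _)
    refine hσ ?_
    calc σ2 = ∑' _ : ℕ, (0:ℝ) := by rw [hσ2def]; exact tsum_congr hz
      _ = 0 := tsum_zero
  set B : ℕ → Set Ω := fun N => {ω | ε * s2 N < S N ω ^ 2} with hBdef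
  have hBm : ∀ N, MeasurableSet (B N) :=
    fun N => measurableSet_lt measurable_const ((hSmeas N).pow_const 2)
  have hPB : ∀ N, k₁ < N → ENNReal.ofReal ((1-ε)^2/3) ≤ P (B N) := by
    intro N hN
    have hs2posN : 0 < s2 N :=
      lt_of_lt_of_le hk₁ (Finset.single_le_sum (f := fun i => x i ^ 2)
        (fun i _ => sq_nonneg _) (Finset.mem_range.mpr hN))
    have hEZ : ∫ ω, S N ω ^ 2 ∂P = s2 N := (rad_moments hr x N).1
    have hE4 : ∫ ω, (S N ω ^ 2) ^ 2 ∂P ≤ 3 * s2 N ^ 2 := by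
      have heq : (fun ω => (S N ω ^ 2) ^ 2) = fun ω => S N ω ^ 4 := by
        funext ω; ring
      rw [heq]
      exact (rad_moments hr x N).2
    have hpz := pz_aux (P := P) (fun ω => S N ω ^ 2) ((hSmeas N).pow_const 2)
      (Eventually.of_forall fun ω => sq_nonneg _) (hIntS N 2)
      (by
        have heq : (fun ω => (S N ω ^ 2) ^ 2) = fun ω => S N ω ^ 4 := by
          funext ω; ring
        rw [heq]; exact hIntS N 4)
      hε.le (le_trans hε3 (by norm_num))
    rw [hEZ] at hpz
    have htR : (1-ε)^2/3 ≤ (P (B N)).toReal := by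
      have h3pos : (0:ℝ) < 3 * s2 N ^ 2 := by positivity
      have hle : (1-ε)^2 * s2 N ^ 2 ≤ 3 * s2 N ^ 2 * (P (B N)).toReal := by
        calc (1-ε)^2 * s2 N ^ 2 ≤ (∫ ω, (S N ω ^ 2) ^ 2 ∂P) * (P (B N)).toReal := hpz
          _ ≤ 3 * s2 N ^ 2 * (P (B N)).toReal :=
            mul_le_mul_of_nonneg_right hE4 ENNReal.toReal_nonneg
      rw [div_le_iff₀ (by norm_num : (0:ℝ) < 3)]
      nlinarith [sq_nonneg (s2 N), ENNReal.toReal_nonneg (a := P (B N))]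
    exact ENNReal.ofReal_le_of_le_toReal htR
  -- limsup of events
  set D : ℕ → Set Ω := fun N => ⋃ k, ⋃ (_ : N ≤ k), B k with hDdef
  have hDm : ∀ N, MeasurableSet (D N) :=
    fun N => MeasurableSet.iUnion fun k => MeasurableSet.iUnion fun _ => hBm k
  have hDanti : Antitone D := by
    intro a b hab
    simp only [hDdef]
    exact Set.iUnion₂_subset fun k hk => Set.subset_iUnion₂ (s := fun k (_ : a ≤ k) => B k) k (hab.trans hk)
  have hDge : ∀ N, ENNReal.ofReal ((1-ε)^2/3) ≤ P (D N) := by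
    intro N
    have hM : k₁ < max N (k₁+1) := lt_of_lt_of_le (Nat.lt_succ_self k₁) (le_max_right _ _)
    refine le_trans (hPB _ hM) (measure_mono ?_)
    simp only [hDdef]
    exact Set.subset_iUnion₂ (s := fun k (_ : N ≤ k) => B k) (max N (k₁+1)) (le_max_left _ _)
  have htendD : Tendsto (P ∘ D) atTop (𝓝 (P (⋂ N, D N))) :=
    tendsto_measure_iInter_atTop (fun N => (hDm N).nullMeasurableSet) hDanti
      ⟨0, measure_ne_top P _⟩
  have hPDinf : ENNReal.ofReal ((1-ε)^2/3) ≤ P (⋂ N, D N) :=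
    ge_of_tendsto htendD (Eventually.of_forall hDge)
  -- on the limsup event, ξ² ≥ ε σ2
  have hincl : ∀ᵐ ω ∂P, ω ∈ (⋂ N, D N) → ε * σ2 ≤ ξ ω ^ 2 := by
    filter_upwards [hξ] with ω hω hmem
    have htxi : Tendsto (fun N => S N ω) atTop (𝓝 (ξ ω)) := by
      have heq : (fun N => S N ω) = fun N => ∑ i ∈ Finset.range N, r i ω * x i := by
        funext N
        exact Finset.sum_congr rfl fun i _ => mul_comm _ _
      rw [heq]
      exact hω.tendsto_sum_nat
    have hts2 : Tendsto s2 atTop (𝓝 σ2) := hxsum.hasSum.tendsto_sum_nat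
    by_contra hcon
    push_neg at hcon
    have hlim : Tendsto (fun N => ε * s2 N - S N ω ^ 2) atTop (𝓝 (ε * σ2 - ξ ω ^ 2)) :=
      (hts2.const_mul ε).sub (htxi.pow 2)
    have hev : ∀ᶠ N in atTop, 0 < ε * s2 N - S N ω ^ 2 :=
      hlim.eventually (eventually_gt_nhds (by linarith))
    have hfreq : ∃ᶠ N in atTop, ε * s2 N < S N ω ^ 2 := by
      rw [Filter.frequently_atTop]
      intro N
      have hN := Set.mem_iInter.mp hmem N
      simp only [hDdef, hBdef, Set.mem_iUnion, Set.mem_setOf_eq] at hN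
      obtain ⟨k, hk, hkB⟩ := hN
      exact ⟨k, hk, hkB⟩
    obtain ⟨N, hN1, hN2⟩ := (hfreq.and_eventually hev).exists
    linarith
  -- the good event
  set F : Set Ω := A ∩ ⋂ N, D N with hFdef
  have hFm : MeasurableSet F := hAm.inter (MeasurableSet.iInter hDm)
  have hPF : ENNReal.ofReal (ε/3) ≤ P F := by
    have h1 : P (A ∪ ⋂ N, D N) + P F = P A + P (⋂ N, D N) :=
      measure_union_add_inter A (MeasurableSet.iInter hDm)
    have h2 : ENNReal.ofReal (2/3 + ε) + ENNReal.ofReal ((1-ε)^2/3)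
        ≤ P A + P (⋂ N, D N) := add_le_add hPA.ge hPDinf
    have h3 : ENNReal.ofReal 1 + ENNReal.ofReal (ε/3)
        ≤ ENNReal.ofReal (2/3 + ε) + ENNReal.ofReal ((1-ε)^2/3) := by
      rw [← ENNReal.ofReal_add (by norm_num) (by positivity),
        ← ENNReal.ofReal_add (by linarith) (by positivity)]
      exact ENNReal.ofReal_le_ofReal (by nlinarith)
    have h4 : ENNReal.ofReal 1 + ENNReal.ofReal (ε/3) ≤ P (A ∪ ⋂ N, D N) + P F := by
      rw [h1]; exact h3.trans h2
    have h5 : P (A ∪ ⋂ N, D N) + P F ≤ ENNReal.ofReal 1 + P F := by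
      gcongr
      · simpa using prob_le_one (μ := P) (s := A ∪ ⋂ N, D N)
    have := h4.trans h5
    exact (ENNReal.add_le_add_iff_left (by simp)).mp this
  -- pointwise bound on F
  set K : ℝ := δ * Real.sqrt (ε * σ2) with hKdef
  have hKpos : 0 < K := by
    have : 0 < Real.sqrt (ε * σ2) := Real.sqrt_pos.mpr (by positivity)
    positivity
  have haeF : ∀ᵐ ω ∂P, ω ∈ F → ENNReal.ofReal K ≤ (‖w ω * ξ ω‖₊ : ℝ≥0∞) := by
    filter_upwards [hincl] with ω h1 h2
    obtain ⟨hA2, hD2⟩ := h2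
    have h3 : ε * σ2 ≤ ξ ω ^ 2 := h1 hD2
    have h4 : Real.sqrt (ε * σ2) ≤ |ξ ω| := by
      rw [← Real.sqrt_sq_eq_abs]
      exact Real.sqrt_le_sqrt h3
    have h5 : K ≤ |w ω * ξ ω| := by
      rw [abs_mul, hKdef]
      exact mul_le_mul hA2 h4 (Real.sqrt_nonneg _) (abs_nonneg _)
    calc ENNReal.ofReal K ≤ ENNReal.ofReal |w ω * ξ ω| := ENNReal.ofReal_le_ofReal h5
      _ = (‖w ω * ξ ω‖₊ : ℝ≥0∞) := by
        rw [← Real.norm_eq_abs]; exact ofReal_norm _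
  -- lintegral bound
  have hq0 : ENNReal.ofReal p ≠ 0 := by
    simp [ENNReal.ofReal_eq_zero, not_le, hp]
  have hqt : ENNReal.ofReal p ≠ ∞ := ENNReal.ofReal_ne_top
  rw [eLpNorm_eq_lintegral_rpow_enorm_toReal hq0 hqt, ENNReal.toReal_ofReal hp.le]
  have hlow : ENNReal.ofReal K ^ p * ENNReal.ofReal (ε/3)
      ≤ ∫⁻ ω, (‖w ω * ξ ω‖₊ : ℝ≥0∞) ^ p ∂P := by
    calc ENNReal.ofReal K ^ p * ENNReal.ofReal (ε/3)
        ≤ ENNReal.ofReal K ^ p * P F := by gcongr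
      _ = ∫⁻ ω, F.indicator (fun _ => ENNReal.ofReal K ^ p) ω ∂P := by
          rw [lintegral_indicator hFm, setLIntegral_const]
      _ ≤ ∫⁻ ω, (‖w ω * ξ ω‖₊ : ℝ≥0∞) ^ p ∂P := by
          refine lintegral_mono_ae ?_
          filter_upwards [haeF] with ω hω
          by_cases hωF : ω ∈ F
          · rw [Set.indicator_of_mem hωF]
            exact ENNReal.rpow_le_rpow (hω hωF) hp.le
          · rw [Set.indicator_of_notMem hωF]
            exact bot_le
  have hfinal : ENNReal.ofReal ((δ * Real.sqrt ε * (ε/3) ^ (1/p))⁻¹⁻¹ * σ2 ^ (1/2:ℝ))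
      = (ENNReal.ofReal K ^ p * ENNReal.ofReal (ε/3)) ^ (1/p) := by
    rw [inv_inv]
    have hval : δ * Real.sqrt ε * (ε/3) ^ (1/p) * σ2 ^ (1/2:ℝ) = K * (ε/3) ^ (1/p) := by
      rw [hKdef, ← Real.sqrt_eq_rpow, Real.sqrt_mul hε.le]
      ring
    rw [hval, ENNReal.ofReal_mul hKpos.le,
      ← ENNReal.ofReal_rpow_of_pos (by positivity : (0:ℝ) < ε/3),
      ENNReal.mul_rpow_of_nonneg _ _ (by positivity : (0:ℝ) ≤ 1/p),
      ← ENNReal.rpow_mul, mul_one_div_cancel hp.ne', ENNReal.rpow_one]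
  rw [hfinal]
  exact ENNReal.rpow_le_rpow hlow (by positivity)
end

section
/- Let B_q = √2 (Γ((q+1)/2)/√π)^{1/q} for q > 2. Then B_q^{−2q/(q−2)} → 2 e^{−2+γ} as q ↓ 2, where γ is Euler's constant. -/
open Filter Real

local notation "γ" => Real.eulerMascheroniConstant

lemma hasDerivAt_Gamma_three_half :
    HasDerivAt Real.Gamma (Real.sqrt Real.pi * (1 - γ / 2 - Real.log 2)) (3 / 2) := by
  have h1 : HasDerivAt (fun x : ℝ => x * Real.Gamma x)
      (1 * Real.Gamma (1 / 2) + 1 / 2 * (-Real.sqrt Real.pi * (γ + 2 * Real.log 2))) (1 / 2) :=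
    (hasDerivAt_id (1 / 2 : ℝ)).mul Real.hasDerivAt_Gamma_one_half
  have h2 : (fun x : ℝ => Real.Gamma (x + 1)) =ᶠ[nhds (1 / 2 : ℝ)]
      fun x : ℝ => x * Real.Gamma x := by
    filter_upwards [eventually_gt_nhds (show (0 : ℝ) < 1 / 2 by norm_num)] with x hx
    rw [Real.Gamma_add_one hx.ne']
  have h3 : HasDerivAt (fun x : ℝ => Real.Gamma (x + 1))
      (1 * Real.Gamma (1 / 2) + 1 / 2 * (-Real.sqrt Real.pi * (γ + 2 * Real.log 2)))
      (1 / 2) := h1.congr_of_eventuallyEq h2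
  have hdiff : DifferentiableAt ℝ Real.Gamma (3 / 2) := by
    refine Real.differentiableAt_Gamma fun m => ?_
    have : -(m : ℝ) ≤ 0 := neg_nonpos.mpr (Nat.cast_nonneg m)
    intro h; rw [← h] at this; norm_num at this
  have hd := hdiff.hasDerivAt
  have hder : deriv Real.Gamma (3 / 2) =
      1 * Real.Gamma (1 / 2) + 1 / 2 * (-Real.sqrt Real.pi * (γ + 2 * Real.log 2)) := by
    have := deriv_comp_add_const (fun y : ℝ => Real.Gamma y) 1 (1 / 2)
    rw [h3.deriv] at this
    rw [show (3 : ℝ) / 2 = 1 / 2 + 1 by norm_num, ← this]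
  rw [hder, Real.Gamma_one_half_eq] at hd
  exact hd.congr_deriv (by ring)

lemma Gamma_three_half : Real.Gamma (3 / 2) = Real.sqrt Real.pi / 2 := by
  rw [show (3 : ℝ) / 2 = 1 / 2 + 1 by norm_num,
    Real.Gamma_add_one (by norm_num), Real.Gamma_one_half_eq]
  ring

/-- With `B_q = √2 (Γ((q+1)/2)/√π)^{1/q}` one has
`B_q^{-2q/(q-2)} → 2 e^{-2+γ}` as `q ↓ 2`, where `γ` is the Euler–Mascheroni constant. -/
theorem haagerup_const_limit :
    Tendsto
      (fun q : ℝ =>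
        (Real.sqrt 2 * (Real.Gamma ((q + 1) / 2) / Real.sqrt Real.pi) ^ (1 / q)) ^
          (-(2 * q) / (q - 2)))
      (nhdsWithin 2 (Set.Ioi 2))
      (nhds (2 * Real.exp (-2 + Real.eulerMascheroniConstant))) := by
  have hπ : (0 : ℝ) < Real.sqrt Real.pi := Real.sqrt_pos.mpr Real.pi_pos
  set f : ℝ → ℝ := fun q =>
    Real.log 2 / 2 * q + Real.log (Real.Gamma ((q + 1) / 2)) - Real.log (Real.sqrt Real.pi)
    with hf_def
  have hf2 : f 2 = 0 := by
    simp only [hf_def]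
    rw [show ((2 : ℝ) + 1) / 2 = 3 / 2 by norm_num, Gamma_three_half,
      Real.log_div hπ.ne' two_ne_zero]
    ring
  -- derivative of f at 2
  have hG32 : Real.Gamma (3 / 2) ≠ 0 := by rw [Gamma_three_half]; positivity
  have hinner : HasDerivAt (fun q : ℝ => (q + 1) / 2) (1 / 2) 2 := by
    simpa using ((hasDerivAt_id (2 : ℝ)).add_const 1).div_const 2
  have hGcomp : HasDerivAt (fun q : ℝ => Real.Gamma ((q + 1) / 2))
      (Real.sqrt Real.pi * (1 - γ / 2 - Real.log 2) * (1 / 2)) 2 := by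
    have houter : HasDerivAt Real.Gamma
        (Real.sqrt Real.pi * (1 - γ / 2 - Real.log 2)) (((2 : ℝ) + 1) / 2) := by
      rw [show ((2 : ℝ) + 1) / 2 = 3 / 2 by norm_num]; exact hasDerivAt_Gamma_three_half
    have := HasDerivAt.comp (h := fun q : ℝ => (q + 1) / 2) (x := 2) houter hinner
    exact this
  have hlogG : HasDerivAt (fun q : ℝ => Real.log (Real.Gamma ((q + 1) / 2)))
      (Real.sqrt Real.pi * (1 - γ / 2 - Real.log 2) * (1 / 2) / Real.Gamma (3 / 2)) 2 := by
    have := hGcomp.log (by rw [show ((2 : ℝ) + 1) / 2 = 3 / 2 by norm_num]; exact hG32)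
    simpa [show ((2 : ℝ) + 1) / 2 = 3 / 2 by norm_num] using this
  set d : ℝ := Real.log 2 / 2 +
    Real.sqrt Real.pi * (1 - γ / 2 - Real.log 2) * (1 / 2) / Real.Gamma (3 / 2) with hd_def
  have hf' : HasDerivAt f d 2 := by
    have h1 : HasDerivAt (fun q : ℝ => Real.log 2 / 2 * q) (Real.log 2 / 2) 2 := by
      simpa using (hasDerivAt_id (2 : ℝ)).const_mul (Real.log 2 / 2)
    simpa [hf_def, hd_def] using (h1.add hlogG).sub_const (Real.log (Real.sqrt Real.pi))
  have hdval : -2 * d = -2 + γ + Real.log 2 := by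
    rw [hd_def, Gamma_three_half]
    field_simp
    ring
  -- slope limit
  have hslope : Tendsto (fun q => -2 * slope f 2 q) (nhdsWithin 2 (Set.Ioi 2))
      (nhds (-2 + γ + Real.log 2)) := by
    rw [← hdval]
    have hmono : nhdsWithin (2 : ℝ) (Set.Ioi 2) ≤ nhdsWithin 2 {(2 : ℝ)}ᶜ :=
      nhdsWithin_mono 2 fun x hx => Set.mem_compl_singleton_iff.mpr (Set.mem_Ioi.mp hx).ne'
    exact ((hasDerivAt_iff_tendsto_slope.mp hf').mono_left hmono).const_mul (-2)
  have hexp : Tendsto (fun q => Real.exp (-2 * slope f 2 q)) (nhdsWithin 2 (Set.Ioi 2))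
      (nhds (Real.exp (-2 + γ + Real.log 2))) :=
    (Real.continuous_exp.tendsto _).comp hslope
  have hval : Real.exp (-2 + γ + Real.log 2) = 2 * Real.exp (-2 + γ) := by
    rw [show -2 + γ + Real.log 2 = Real.log 2 + (-2 + γ) by ring, Real.exp_add,
      Real.exp_log two_pos]
  rw [← hval]
  refine hexp.congr' ?_
  filter_upwards [self_mem_nhdsWithin] with q (hq : 2 < q)
  have hq0 : (0 : ℝ) < q := by linarith
  have hq2 : q - 2 ≠ 0 := by intro h; apply absurd hq; linarith [sub_eq_zero.mp h]
  have hGpos : 0 < Real.Gamma ((q + 1) / 2) := Real.Gamma_pos_of_pos (by positivity)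
  have hXpos : 0 < Real.Gamma ((q + 1) / 2) / Real.sqrt Real.pi := by positivity
  have hbase : 0 < Real.sqrt 2 * (Real.Gamma ((q + 1) / 2) / Real.sqrt Real.pi) ^ (1 / q) := by
    have := Real.rpow_pos_of_pos hXpos (1 / q)
    positivity
  rw [Real.rpow_def_of_pos hbase, Real.log_mul (by positivity)
    (Real.rpow_pos_of_pos hXpos (1 / q)).ne', Real.log_rpow hXpos,
    Real.log_sqrt (by norm_num : (0 : ℝ) ≤ 2),
    Real.log_div hGpos.ne' hπ.ne', slope_def_field, hf2, hf_def]
  congr 1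
  field_simp
  ring
end
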